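/- Let (A, m) be a local ring that is not Gaussian and E a nonzero A/m-vector space. Then the trivial ring extension A ⋉ E is not Gaussian. -/

import Mathlib

/-- The content ideal of a polynomial: the ideal generated by its coefficients. -/
noncomputable def contentIdeal {R : Type*} [CommRing R] (p : Polynomial R) : Ideal R :=
  Ideal.span (Set.range p.coeff)

/-- A commutative ring is Gaussian if `c(pq) = c(p)c(q)` for all polynomials. -/
def IsGaussianRing (R : Type*) [CommRing R] : Prop :=
  ∀ p q : Polynomial R, contentIdeal (p * q) = contentIdeal p * contentIdeal q

lemma contentIdeal_map {R S : Type*} [CommRing R] [CommRing S] (f : R →+* S)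
    (p : Polynomial R) : contentIdeal (p.map f) = Ideal.map f (contentIdeal p) := by
  unfold contentIdeal
  rw [Ideal.map_span, ← Set.range_comp]
  congr 1
  ext n
  simp [Polynomial.coeff_map]

/-- if `(A, m)` is local and not Gaussian and `E` is a nonzero `A/m`-vector
space, then `A ⋉ E` is not Gaussian. -/
theorem trivSqZeroExt_not_gaussian
    (A E : Type*) [CommRing A] [IsLocalRing A]
    [AddCommGroup E] [Module A E] [Module Aᵐᵒᵖ E] [IsCentralScalar A E]
    [Nontrivial E]
    (hkill : ∀ a ∈ IsLocalRing.maximalIdeal A, ∀ e : E, a • e = 0)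
    (hA : ¬ IsGaussianRing A) :
    ¬ IsGaussianRing (TrivSqZeroExt A E) := by
  intro h
  apply hA
  intro p q
  let ι : A →+* TrivSqZeroExt A E := TrivSqZeroExt.inlHom A E
  let π : TrivSqZeroExt A E →+* A := (TrivSqZeroExt.fstHom A A E).toRingHom
  have hπι : ∀ r : Polynomial A, (r.map ι).map π = r := by
    intro r
    rw [Polynomial.map_map]
    convert Polynomial.map_id
    exact RingHom.ext fun _ => rfl
  have key := h (p.map ι) (q.map ι)
  have := congrArg (Ideal.map π) key
  rwa [← contentIdeal_map, Ideal.map_mul, ← contentIdeal_map, ← contentIdeal_map,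
    ← Polynomial.map_mul, hπι, hπι, hπι] at this
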